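/- Let 0 < σ_low ≤ σ_high and b : ℝ → ℝ be defined by b(u) = -u for u ≤ -σ_low², b(u) = (σ_low² - u)²/(4σ_low²) for -σ_low² < u < 0, and b(u) = a(√u)² for u ≥ 0, where a(σ) = (σ_low² - σ²)/(2σ_low) for 0 ≤ σ ≤ σ_low, a(σ) = 0 for σ_low ≤ σ ≤ σ_high, and a(σ) = (σ² - σ_high²)/(2σ_high) for σ ≥ σ_high. Then for all real x, y with σ_low ≤ |x| ≤ σ_high, we have b(x² + 2xy) ≤ y². -/
import Mathlib

lemma key_aux (σlow σhigh : ℝ) (hσ0 : 0 < σlow) (hσ : σlow ≤ σhigh)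
    (a b : ℝ → ℝ)
    (ha1 : ∀ σ : ℝ, 0 ≤ σ → σ ≤ σlow → a σ = (σlow ^ 2 - σ ^ 2) / (2 * σlow))
    (ha2 : ∀ σ : ℝ, σlow ≤ σ → σ ≤ σhigh → a σ = 0)
    (ha3 : ∀ σ : ℝ, σhigh ≤ σ → a σ = (σ ^ 2 - σhigh ^ 2) / (2 * σhigh))
    (hb1 : ∀ u : ℝ, u ≤ -σlow ^ 2 → b u = -u)
    (hb2 : ∀ u : ℝ, -σlow ^ 2 < u → u < 0 → b u = (σlow ^ 2 - u) ^ 2 / (4 * σlow ^ 2))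
    (hb3 : ∀ u : ℝ, 0 ≤ u → b u = (a (Real.sqrt u)) ^ 2)
    (x y : ℝ) (hx1 : σlow ≤ x) (hx2 : x ≤ σhigh) :
    b (x ^ 2 + 2 * x * y) ≤ y ^ 2 := by
  have hx0 : 0 < x := lt_of_lt_of_le hσ0 hx1
  set u : ℝ := x ^ 2 + 2 * x * y with hu
  -- key positivity fact used in the middle cases
  have hmid : ∀ _ : -σlow ^ 2 < u, 0 < x + σlow + 2 * y := by
    intro h
    have hxprod : 0 < x * (x + σlow + 2 * y) := by nlinarith
    by_contra hc
    push_neg at hc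
    nlinarith
  have hsqle : ∀ A B : ℝ, 0 ≤ A → A ≤ B → A ^ 2 ≤ B ^ 2 := by
    intro A B hA hAB; nlinarith
  rcases le_or_gt u (-σlow ^ 2) with h | h
  · rw [hb1 u h]
    nlinarith [sq_nonneg (x + y)]
  rcases lt_or_ge u 0 with h2 | h2
  · rw [hb2 u h h2, div_le_iff₀ (by positivity)]
    have h5 := hmid h
    have hA : (0:ℝ) ≤ σlow ^ 2 - u := by nlinarith
    have hAB : σlow ^ 2 - u ≤ -(2 * σlow * y) := by nlinarith [mul_nonneg (sub_nonneg.2 hx1) h5.le]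
    nlinarith [hsqle _ _ hA hAB]
  rw [hb3 u h2]
  rcases le_or_gt u (σlow ^ 2) with h3 | h3
  · have hs : Real.sqrt u ≤ σlow := by
      calc Real.sqrt u ≤ Real.sqrt (σlow ^ 2) := Real.sqrt_le_sqrt h3
        _ = σlow := Real.sqrt_sq hσ0.le
    rw [ha1 _ (Real.sqrt_nonneg u) hs, Real.sq_sqrt h2, div_pow, div_le_iff₀ (by positivity)]
    have h5 := hmid (by nlinarith)
    have hA : (0:ℝ) ≤ σlow ^ 2 - u := by linarith
    have hAB : σlow ^ 2 - u ≤ -(2 * σlow * y) := by nlinarith [mul_nonneg (sub_nonneg.2 hx1) h5.le]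
    nlinarith [hsqle _ _ hA hAB]
  rcases le_or_gt u (σhigh ^ 2) with h4 | h4
  · have hs1 : σlow ≤ Real.sqrt u := by
      calc σlow = Real.sqrt (σlow ^ 2) := (Real.sqrt_sq hσ0.le).symm
        _ ≤ Real.sqrt u := Real.sqrt_le_sqrt h3.le
    have hs2 : Real.sqrt u ≤ σhigh := by
      calc Real.sqrt u ≤ Real.sqrt (σhigh ^ 2) := Real.sqrt_le_sqrt h4
        _ = σhigh := Real.sqrt_sq (hσ0.trans_le hσ).le
    rw [ha2 _ hs1 hs2]
    simpa using sq_nonneg y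
  · have hs : σhigh ≤ Real.sqrt u := by
      calc σhigh = Real.sqrt (σhigh ^ 2) := (Real.sqrt_sq (hσ0.trans_le hσ).le).symm
        _ ≤ Real.sqrt u := Real.sqrt_le_sqrt h4.le
    rw [ha3 _ hs, Real.sq_sqrt h2, div_pow, div_le_iff₀ (by nlinarith)]
    have hA : (0:ℝ) ≤ u - σhigh ^ 2 := by linarith
    have hAB : u - σhigh ^ 2 ≤ 2 * x * y := by nlinarith
    have hy : 0 ≤ y := by nlinarith
    have := hsqle _ _ hA hAB
    nlinarith [mul_le_mul_of_nonneg_right (mul_le_mul_of_nonneg_left hx2 (le_of_lt hσ0)) (sq_nonneg y), sq_nonneg (x*y)]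

/-- Lemma 3.17 of the paper: for `σ_low ≤ |x| ≤ σ_high`, `b (x² + 2xy) ≤ y²`. -/
theorem stmt_0 (σlow σhigh : ℝ) (hσ0 : 0 < σlow) (hσ : σlow ≤ σhigh)
    (a b : ℝ → ℝ)
    (ha1 : ∀ σ : ℝ, 0 ≤ σ → σ ≤ σlow → a σ = (σlow ^ 2 - σ ^ 2) / (2 * σlow))
    (ha2 : ∀ σ : ℝ, σlow ≤ σ → σ ≤ σhigh → a σ = 0)
    (ha3 : ∀ σ : ℝ, σhigh ≤ σ → a σ = (σ ^ 2 - σhigh ^ 2) / (2 * σhigh))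
    (hb1 : ∀ u : ℝ, u ≤ -σlow ^ 2 → b u = -u)
    (hb2 : ∀ u : ℝ, -σlow ^ 2 < u → u < 0 → b u = (σlow ^ 2 - u) ^ 2 / (4 * σlow ^ 2))
    (hb3 : ∀ u : ℝ, 0 ≤ u → b u = (a (Real.sqrt u)) ^ 2) :
    ∀ x y : ℝ, σlow ≤ |x| → |x| ≤ σhigh → b (x ^ 2 + 2 * x * y) ≤ y ^ 2 := by
  intro x y hx1 hx2
  rcases abs_cases x with ⟨hax, _⟩ | ⟨hax, _⟩
  · exact key_aux σlow σhigh hσ0 hσ a b ha1 ha2 ha3 hb1 hb2 hb3 x y (hax ▸ hx1) (hax ▸ hx2)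
  · have := key_aux σlow σhigh hσ0 hσ a b ha1 ha2 ha3 hb1 hb2 hb3 (-x) (-y)
      (hax ▸ hx1) (hax ▸ hx2)
    have heq : (-x) ^ 2 + 2 * (-x) * (-y) = x ^ 2 + 2 * x * y := by ring
    rw [heq] at this
    simpa using this
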